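/- Let P be a simplicial poset of rank d ≥ 2 satisfying properties (i)–(iii). Then for any S ⊆ {1,…,d} with |S| = 2, the rank-selected poset P_S is connected: any two vertices of P_S can be joined by a path of rank-2 elements of P whose two vertices both have colors in S. -/

import Mathlib

/-- `P` (a finite poset with least element `⊥`) is a simplicial poset with rank
function `rk`: every lower interval `[⊥, x]` is isomorphic to the Boolean lattice of
subsets of an `rk x`-element set. -/
def IsSimplicialPoset (P : Type*) [PartialOrder P] [OrderBot P] (rk : P → ℕ) : Prop :=
  ∀ x : P, Nonempty (Set.Icc (⊥ : P) x ≃o Finset (Fin (rk x)))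

/-- `P` has rank `d`. -/
def PosetRank {P : Type*} (rk : P → ℕ) (d : ℕ) : Prop :=
  (∀ x : P, rk x ≤ d) ∧ ∃ x : P, rk x = d

/-- Property (i): `P` is pure, i.e. every facet (maximal element) has rank `d`. -/
def PosetPure {P : Type*} [PartialOrder P] (rk : P → ℕ) (d : ℕ) : Prop :=
  ∀ x : P, IsMax x → rk x = d

/-- Property (ii): `P` is balanced with respect to the coloring `κ` of its vertices
by `d` colors: distinct vertices lying below a common facet receive distinct colors. -/
def PosetBalanced {P : Type*} [PartialOrder P] {d : ℕ} (rk : P → ℕ) (κ : P → Fin d) :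
    Prop :=
  ∀ σ : P, IsMax σ → ∀ v w : P, rk v = 1 → rk w = 1 → v ≤ σ → w ≤ σ → v ≠ w → κ v ≠ κ w

/-- The link `lk_P τ = {σ ∈ P : σ ≥ τ}` is connected: any two of its vertices (the
elements of rank `rk τ + 1` above `τ`) are joined by a path of rank-2 elements of the
link (the elements of rank `rk τ + 2` above `τ`). -/
def ConnAbove {P : Type*} [PartialOrder P] (rk : P → ℕ) (τ : P) : Prop :=
  ∀ v w : P, τ < v → rk v = rk τ + 1 → τ < w → rk w = rk τ + 1 →
    Relation.ReflTransGen
      (fun a b => τ < a ∧ τ < b ∧ rk a = rk τ + 1 ∧ rk b = rk τ + 1 ∧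
        ∃ e : P, a ≤ e ∧ b ≤ e ∧ rk e = rk τ + 2) v w

/-- Property (iii): the link of every face of rank `< d - 1` (including `⊥`, so in
particular `P` itself) is connected. -/
def PosetLinksConn {P : Type*} [PartialOrder P] (rk : P → ℕ) (d : ℕ) : Prop :=
  ∀ σ : P, rk σ < d - 1 → ConnAbove rk σ


set_option linter.unusedSectionVars false

section Aux
variable {P : Type*} [Fintype P] [PartialOrder P] [OrderBot P] {rk : P → ℕ}

lemma aux_card_Icc (hSP : IsSimplicialPoset P rk) (y : P) :
    Nat.card (Set.Icc (⊥ : P) y) = 2 ^ rk y := by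
  obtain ⟨f⟩ := hSP y
  rw [Nat.card_congr f.toEquiv, Nat.card_eq_fintype_card, Fintype.card_finset, Fintype.card_fin]

lemma aux_rk_card (hSP : IsSimplicialPoset P rk) {x : P}
    (f : Set.Icc (⊥ : P) x ≃o Finset (Fin (rk x))) {y : P} (hy : y ≤ x) :
    rk y = (f ⟨y, bot_le, hy⟩).card := by
  set t := f ⟨y, bot_le, hy⟩ with ht
  have key : Nat.card (Set.Icc (⊥ : P) y) = Nat.card {u : Finset (Fin (rk x)) // u ≤ t} := by
    apply Nat.card_congr
    refine ⟨fun z => ⟨f ⟨z.1, z.2.1, le_trans z.2.2 hy⟩, ?_⟩,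
            fun u => ⟨(f.symm u.1).1, (f.symm u.1).2.1, ?_⟩, ?_, ?_⟩
    · rw [ht]; exact f.le_iff_le.mpr (Subtype.mk_le_mk.mpr z.2.2)
    · have h1 : f.symm u.1 ≤ f.symm t := f.symm.monotone u.2
      have h2 : f.symm t = ⟨y, bot_le, hy⟩ := by rw [ht, f.symm_apply_apply]
      rw [h2] at h1
      exact Subtype.coe_le_coe.mpr h1
    · intro z
      apply Subtype.ext
      show ((f.symm (f _)) : Set.Icc (⊥:P) x).1 = z.1
      rw [f.symm_apply_apply]
    · intro u
      apply Subtype.ext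
      show f ⟨(f.symm u.1).1, _⟩ = u.1
      exact f.apply_symm_apply _
  have h2 : Nat.card {u : Finset (Fin (rk x)) // u ≤ t} = 2 ^ t.card := by
    rw [Nat.card_congr (Equiv.subtypeEquivRight (q := fun u => u ∈ t.powerset)
      (fun u => by simp [Finset.mem_powerset, Finset.le_iff_subset]))]
    rw [Nat.card_eq_fintype_card, Fintype.card_coe, Finset.card_powerset]
  rw [aux_card_Icc hSP y] at key
  exact Nat.pow_right_injective (by norm_num) (key.trans h2)

lemma aux_rk_bot (hSP : IsSimplicialPoset P rk) : rk (⊥ : P) = 0 := by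
  have h := aux_card_Icc hSP (⊥ : P)
  rw [Set.Icc_self] at h
  have h1 : Nat.card ({⊥} : Set P) = 1 := by simp
  rw [h1] at h
  have : (2:ℕ) ^ 0 = 2 ^ rk (⊥:P) := h
  exact (Nat.pow_right_injective (by norm_num) this).symm

lemma aux_rk_lt (hSP : IsSimplicialPoset P rk) {x y : P} (h : y < x) : rk y < rk x := by
  obtain ⟨f⟩ := hSP x
  have h1 := aux_rk_card hSP f h.le
  have h2 := aux_rk_card hSP f (le_refl x)
  have h3 : (f ⟨y, bot_le, h.le⟩).card < (f ⟨x, bot_le, le_refl x⟩).card := by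
    apply Finset.card_lt_card
    rw [← Finset.lt_iff_ssubset]
    exact f.lt_iff_lt.mpr (Subtype.mk_lt_mk.mpr h)
  omega

lemma aux_isMax (hSP : IsSimplicialPoset P rk) {d : ℕ} (hle : ∀ x : P, rk x ≤ d)
    {x : P} (hx : rk x = d) : IsMax x := by
  intro y hxy
  rcases eq_or_lt_of_le hxy with h | h
  · exact h.ge
  · exact absurd (aux_rk_lt hSP h) (by have := hle y; omega)

lemma aux_exists_facet (x : P) : ∃ F : P, x ≤ F ∧ IsMax F := by
  obtain ⟨F, hF, hmax⟩ := Set.Finite.exists_maximalFor id {y : P | x ≤ y}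
    (Set.toFinite _) ⟨x, le_refl x⟩
  exact ⟨F, hF, fun z hz => hmax (le_trans hF hz) hz⟩

lemma aux_exists_succ (hSP : IsSimplicialPoset P rk) {τ F : P} (hτF : τ ≤ F)
    (h : rk τ < rk F) : ∃ v : P, τ < v ∧ v ≤ F ∧ rk v = rk τ + 1 := by
  obtain ⟨f⟩ := hSP F
  have ht := aux_rk_card hSP f hτF
  set t := f ⟨τ, bot_le, hτF⟩ with htt
  have hne : (tᶜ : Finset (Fin (rk F))).Nonempty := Finset.card_pos.mp (by
    rw [Finset.card_compl, Fintype.card_fin]; omega)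
  obtain ⟨i, hi⟩ := hne
  have hi' : i ∉ t := Finset.mem_compl.mp hi
  refine ⟨(f.symm (insert i t)).1, ?_, (f.symm (insert i t)).2.2, ?_⟩
  · have hlt : (⟨τ, bot_le, hτF⟩ : Set.Icc (⊥:P) F) < f.symm (insert i t) := by
      have h2 : f.symm t = ⟨τ, bot_le, hτF⟩ := by rw [htt, f.symm_apply_apply]
      rw [← h2]
      exact f.symm.lt_iff_lt.mpr (Finset.lt_iff_ssubset.mpr (Finset.ssubset_insert hi'))
    exact Subtype.coe_lt_coe.mpr hlt
  · rw [aux_rk_card hSP f (f.symm (insert i t)).2.2]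
    have h3 : f ⟨(f.symm (insert i t)).1, (f.symm (insert i t)).2.1,
        (f.symm (insert i t)).2.2⟩ = insert i t := by
      exact f.apply_symm_apply _
    rw [h3, Finset.card_insert_of_notMem hi', ← ht]

lemma aux_exists_edge (hSP : IsSimplicialPoset P rk) {F u v : P} (hu : u ≤ F) (hv : v ≤ F)
    (hru : rk u = 1) (hrv : rk v = 1) (huv : u ≠ v) :
    ∃ e : P, rk e = 2 ∧ u ≤ e ∧ v ≤ e := by
  obtain ⟨f⟩ := hSP F
  set a := f ⟨u, bot_le, hu⟩ with ha
  set b := f ⟨v, bot_le, hv⟩ with hb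
  have hca : a.card = 1 := by rw [← aux_rk_card hSP f hu]; exact hru
  have hcb : b.card = 1 := by rw [← aux_rk_card hSP f hv]; exact hrv
  obtain ⟨i, hi⟩ := Finset.card_eq_one.mp hca
  obtain ⟨j, hj⟩ := Finset.card_eq_one.mp hcb
  have hij : i ≠ j := by
    intro h
    apply huv
    have : a = b := by rw [hi, hj, h]
    have h2 : (⟨u, bot_le, hu⟩ : Set.Icc (⊥:P) F) = ⟨v, bot_le, hv⟩ := f.injective this
    exact congrArg Subtype.val h2
  refine ⟨(f.symm (a ∪ b)).1, ?_, ?_, ?_⟩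
  · rw [aux_rk_card hSP f (f.symm (a ∪ b)).2.2]
    have h3 : f ⟨(f.symm (a ∪ b)).1, (f.symm (a ∪ b)).2.1, (f.symm (a ∪ b)).2.2⟩ = a ∪ b := by
      exact f.apply_symm_apply _
    rw [h3, hi, hj, ← Finset.insert_eq, Finset.card_insert_of_notMem (by simp [hij]),
      Finset.card_singleton]
  · have : (⟨u, bot_le, hu⟩ : Set.Icc (⊥:P) F) ≤ f.symm (a ∪ b) := by
      rw [← f.symm_apply_apply ⟨u, bot_le, hu⟩, ← ha]
      exact f.symm.monotone Finset.subset_union_left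
    exact Subtype.coe_le_coe.mpr this
  · have : (⟨v, bot_le, hv⟩ : Set.Icc (⊥:P) F) ≤ f.symm (a ∪ b) := by
      rw [← f.symm_apply_apply ⟨v, bot_le, hv⟩, ← hb]
      exact f.symm.monotone Finset.subset_union_right
    exact Subtype.coe_le_coe.mpr this

variable {d : ℕ} {κ : P → Fin d}

lemma aux_vertex_unique (hii : PosetBalanced rk κ) {F u v : P} (hF : IsMax F)
    (hu : u ≤ F) (hv : v ≤ F) (hru : rk u = 1) (hrv : rk v = 1) (hc : κ u = κ v) : u = v := by
  by_contra h
  exact hii F hF u v hru hrv hu hv h hc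

lemma aux_vertex_color (hSP : IsSimplicialPoset P rk) (hii : PosetBalanced rk κ)
    {F : P} (hF : IsMax F) (hFd : rk F = d) (c : Fin d) :
    ∃ v : P, v ≤ F ∧ rk v = 1 ∧ κ v = c := by
  obtain ⟨f⟩ := hSP F
  set g : Fin (rk F) → Fin d := fun i => κ ((f.symm {i}) : Set.Icc (⊥:P) F).1 with hg
  have hat : ∀ i : Fin (rk F), ((f.symm {i}) : Set.Icc (⊥:P) F).1 ≤ F :=
    fun i => (f.symm {i}).2.2
  have hrk1 : ∀ i : Fin (rk F), rk ((f.symm {i}) : Set.Icc (⊥:P) F).1 = 1 := by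
    intro i
    rw [aux_rk_card hSP f (hat i)]
    have h3 : f ⟨((f.symm {i}) : Set.Icc (⊥:P) F).1, (f.symm {i}).2.1, hat i⟩ = {i} := by
      exact f.apply_symm_apply _
    rw [h3, Finset.card_singleton]
  have hinj : Function.Injective g := by
    intro i j hij
    by_contra hne
    have hne' : ((f.symm {i}) : Set.Icc (⊥:P) F).1 ≠ ((f.symm {j}) : Set.Icc (⊥:P) F).1 := by
      intro h
      exact hne (Finset.singleton_inj.mp (f.symm.injective (Subtype.ext h)))
    exact hii F hF _ _ (hrk1 i) (hrk1 j) (hat i) (hat j) hne' hij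
  have himg : Finset.image g Finset.univ = Finset.univ := by
    apply Finset.eq_of_subset_of_card_le (Finset.subset_univ _)
    rw [Finset.card_image_of_injective _ hinj, Finset.card_univ, Finset.card_univ,
      Fintype.card_fin, Fintype.card_fin, hFd]
  have : c ∈ Finset.image g Finset.univ := by rw [himg]; exact Finset.mem_univ c
  obtain ⟨i, _, hi⟩ := Finset.mem_image.mp this
  exact ⟨_, hat i, hrk1 i, hi⟩

lemma aux_other_color (hSP : IsSimplicialPoset P rk) (hii : PosetBalanced rk κ)
    {τ F : P} (hτF : τ ≤ F) (hFm : IsMax F) (hτ : rk τ + 1 = d) {s : Fin d}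
    (hnos : ∀ u : P, u ≤ τ → rk u = 1 → κ u ≠ s) {t : Fin d} (hts : t ≠ s) :
    ∃ u : P, u ≤ τ ∧ rk u = 1 ∧ κ u = t := by
  obtain ⟨f⟩ := hSP τ
  set g : Fin (rk τ) → Fin d := fun i => κ ((f.symm {i}) : Set.Icc (⊥:P) τ).1 with hg
  have hat : ∀ i : Fin (rk τ), ((f.symm {i}) : Set.Icc (⊥:P) τ).1 ≤ τ :=
    fun i => (f.symm {i}).2.2
  have hrk1 : ∀ i : Fin (rk τ), rk ((f.symm {i}) : Set.Icc (⊥:P) τ).1 = 1 := by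
    intro i
    rw [aux_rk_card hSP f (hat i)]
    have h3 : f ⟨((f.symm {i}) : Set.Icc (⊥:P) τ).1, (f.symm {i}).2.1, hat i⟩ = {i} := by
      exact f.apply_symm_apply _
    rw [h3, Finset.card_singleton]
  have hinj : Function.Injective g := by
    intro i j hij
    by_contra hne
    have hne' : ((f.symm {i}) : Set.Icc (⊥:P) τ).1 ≠ ((f.symm {j}) : Set.Icc (⊥:P) τ).1 := by
      intro h
      exact hne (Finset.singleton_inj.mp (f.symm.injective (Subtype.ext h)))
    exact hii F hFm _ _ (hrk1 i) (hrk1 j) ((hat i).trans hτF) ((hat j).trans hτF) hne' hij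
  have himg : Finset.image g Finset.univ = Finset.univ.erase s := by
    apply Finset.eq_of_subset_of_card_le
    · intro c hc
      obtain ⟨i, _, rfl⟩ := Finset.mem_image.mp hc
      exact Finset.mem_erase.mpr ⟨hnos _ (hat i) (hrk1 i), Finset.mem_univ _⟩
    · rw [Finset.card_erase_of_mem (Finset.mem_univ s), Finset.card_univ, Fintype.card_fin,
        Finset.card_image_of_injective _ hinj, Finset.card_univ, Fintype.card_fin]
      omega
  have : t ∈ Finset.image g Finset.univ := by
    rw [himg]; exact Finset.mem_erase.mpr ⟨hts, Finset.mem_univ _⟩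
  obtain ⟨i, _, hi⟩ := Finset.mem_image.mp this
  exact ⟨_, hat i, hrk1 i, hi⟩

end Aux

/-- If `P` is a simplicial poset of rank `d ≥ 2` satisfying
properties (i)–(iii), then for every set `S` of two colors the rank-selected poset
`P_S` is connected: any two vertices of `P_S` are joined by a path of rank-2 elements
of `P` whose two vertices both have colors in `S`. -/
theorem posetRankSel_connected {P : Type*} [Fintype P] [PartialOrder P] [OrderBot P]
    (rk : P → ℕ) (d : ℕ) (hd : 2 ≤ d) (κ : P → Fin d)
    (hSP : IsSimplicialPoset P rk) (hrk : PosetRank rk d)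
    (hi : PosetPure rk d) (hii : PosetBalanced rk κ) (hiii : PosetLinksConn rk d)
    (S : Finset (Fin d)) (hS : S.card = 2) :
    ∀ v w : P, rk v = 1 → κ v ∈ S → rk w = 1 → κ w ∈ S →
      Relation.ReflTransGen
        (fun a b => rk a = 1 ∧ rk b = 1 ∧ κ a ∈ S ∧ κ b ∈ S ∧
          ∃ e : P, rk e = 2 ∧ a ≤ e ∧ b ≤ e) v w := by
  intro v w hv1 hvS hw1 hwS
  obtain ⟨s, t, hst, hSeq⟩ := Finset.card_eq_two.mp hS
  have hsS : s ∈ S := by rw [hSeq]; simp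
  have htS : t ∈ S := by rw [hSeq]; simp
  have hbot : rk (⊥ : P) = 0 := aux_rk_bot hSP
  have hrkle := hrk.1
  have claim : ∀ n : ℕ, ∀ τ : P, d - rk τ ≤ n → ∀ a b : Fin d, a ∈ S → b ∈ S → a ≠ b →
      ∀ F G : P, τ ≤ F → τ ≤ G → IsMax F → IsMax G →
      ∀ vF vG : P, rk vF = 1 → κ vF = a → vF ≤ F → rk vG = 1 → κ vG = a → vG ≤ G →
      Relation.ReflTransGen
        (fun x y => rk x = 1 ∧ rk y = 1 ∧ κ x ∈ S ∧ κ y ∈ S ∧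
          ∃ e : P, rk e = 2 ∧ x ≤ e ∧ y ≤ e) vF vG := by
    intro n
    induction n with
    | zero =>
      intro τ hn a b haS hbS hab F G hτF hτG hFm hGm vF vG h1 h2 h3 h4 h5 h6
      have hτd : rk τ = d := le_antisymm (hrkle τ) (by omega)
      have hτm : IsMax τ := aux_isMax hSP hrkle hτd
      have : vF = vG :=
        aux_vertex_unique hii hFm h3 (h6.trans ((hτm hτG).trans hτF)) h1 h4 (h2.trans h5.symm)
      exact this ▸ Relation.ReflTransGen.refl
    | succ n IH =>
      intro τ hn a b haS hbS hab F G hτF hτG hFm hGm vF vG h1 h2 h3 h4 h5 h6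
      have hFd : rk F = d := hi F hFm
      have hGd : rk G = d := hi G hGm
      have hτd : rk τ ≤ d := hrkle τ
      rcases (by omega : rk τ = d ∨ rk τ + 1 = d ∨ rk τ + 1 < d) with hc | hc | hc
      · have hτm : IsMax τ := aux_isMax hSP hrkle hc
        have : vF = vG :=
          aux_vertex_unique hii hFm h3 (h6.trans ((hτm hτG).trans hτF)) h1 h4 (h2.trans h5.symm)
        exact this ▸ Relation.ReflTransGen.refl
      · by_cases hex : ∃ u : P, u ≤ τ ∧ rk u = 1 ∧ κ u = a
        · obtain ⟨u, huτ, hu1, hua⟩ := hex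
          have e1 : vF = u :=
            aux_vertex_unique hii hFm h3 (huτ.trans hτF) h1 hu1 (h2.trans hua.symm)
          have e2 : vG = u :=
            aux_vertex_unique hii hGm h6 (huτ.trans hτG) h4 hu1 (h5.trans hua.symm)
          exact (e1.trans e2.symm) ▸ Relation.ReflTransGen.refl
        · push_neg at hex
          obtain ⟨u, huτ, hu1, hub⟩ := aux_other_color hSP hii hτF hFm hc hex hab.symm
          have hvFu : vF ≠ u := fun h => hab (by rw [← h2, h, hub])
          have hvGu : vG ≠ u := fun h => hab (by rw [← h5, h, hub])
          obtain ⟨e1, he1, hve1, hue1⟩ :=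
            aux_exists_edge hSP h3 (huτ.trans hτF) h1 hu1 hvFu
          obtain ⟨e2, he2, hue2, hve2⟩ :=
            aux_exists_edge hSP (huτ.trans hτG) h6 hu1 h4 hvGu.symm
          refine Relation.ReflTransGen.head (b := u) ?_ (Relation.ReflTransGen.single ?_)
          · exact ⟨h1, hu1, by rw [h2]; exact haS, by rw [hub]; exact hbS, e1, he1, hve1, hue1⟩
          · exact ⟨hu1, h4, by rw [hub]; exact hbS, by rw [h5]; exact haS, e2, he2, hue2, hve2⟩
      · obtain ⟨v0, hτv0, hv0F, hrv0⟩ := aux_exists_succ hSP hτF (by omega)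
        obtain ⟨w0, hτw0, hw0G, hrw0⟩ := aux_exists_succ hSP hτG (by omega)
        have hchain := hiii τ (by omega) v0 w0 hτv0 hrv0 hτw0 hrw0
        have key : ∀ x : P, Relation.ReflTransGen
            (fun p q => τ < p ∧ τ < q ∧ rk p = rk τ + 1 ∧ rk q = rk τ + 1 ∧
              ∃ e : P, p ≤ e ∧ q ≤ e ∧ rk e = rk τ + 2) x w0 →
            ∀ H : P, IsMax H → x ≤ H → ∀ u : P, rk u = 1 → κ u = a → u ≤ H →
            Relation.ReflTransGen (fun p q => rk p = 1 ∧ rk q = 1 ∧ κ p ∈ S ∧ κ q ∈ S ∧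
              ∃ e : P, rk e = 2 ∧ p ≤ e ∧ q ≤ e) u vG := by
          intro x hx
          induction hx using Relation.ReflTransGen.head_induction_on with
          | refl =>
            intro H hHm hxH u hu1 hua huH
            exact IH w0 (by omega) a b haS hbS hab H G hxH hw0G hHm hGm u vG
              hu1 hua huH h4 h5 h6
          | head hstep hrest ih =>
            intro H hHm hxH u hu1 hua huH
            obtain ⟨hτp, hτq, hrp, hrq, e, hpe, hqe, hre⟩ := hstep
            obtain ⟨E, heE, hEm⟩ := aux_exists_facet e
            obtain ⟨uE, huEE, huE1, huEa⟩ := aux_vertex_color hSP hii hEm (hi E hEm) a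
            have step1 := IH _ (by omega) a b haS hbS hab H E hxH (hpe.trans heE) hHm hEm
              u uE hu1 hua huH huE1 huEa huEE
            have step2 := ih E hEm (hqe.trans heE) uE huE1 huEa huEE
            exact step1.trans step2
        exact key v0 hchain F hFm hv0F vF h1 h2 h3
  have hbv : (⊥ : P) < v := lt_of_le_of_ne bot_le (fun h => by rw [← h, hbot] at hv1; omega)
  have hbw : (⊥ : P) < w := lt_of_le_of_ne bot_le (fun h => by rw [← h, hbot] at hw1; omega)
  have hconn := hiii ⊥ (by omega) v w hbv (by omega) hbw (by omega)
  have key2 : ∀ x : P, Relation.ReflTransGen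
      (fun p q => (⊥:P) < p ∧ (⊥:P) < q ∧ rk p = rk (⊥:P) + 1 ∧ rk q = rk (⊥:P) + 1 ∧
        ∃ e : P, p ≤ e ∧ q ≤ e ∧ rk e = rk (⊥:P) + 2) x w →
      ∀ H : P, IsMax H → x ≤ H → ∀ u : P, rk u = 1 → κ u ∈ S → u ≤ H →
      Relation.ReflTransGen (fun p q => rk p = 1 ∧ rk q = 1 ∧ κ p ∈ S ∧ κ q ∈ S ∧
        ∃ e : P, rk e = 2 ∧ p ≤ e ∧ q ≤ e) u w := by
    intro x hx
    induction hx using Relation.ReflTransGen.head_induction_on with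
    | refl =>
      intro H hHm hxH u hu1 huS huH
      by_cases hc : κ u = κ w
      · have : u = w := aux_vertex_unique hii hHm huH hxH hu1 hw1 hc
        exact this ▸ Relation.ReflTransGen.refl
      · have hne : u ≠ w := fun h => hc (by rw [h])
        obtain ⟨e, he, hue, hwe⟩ := aux_exists_edge hSP huH hxH hu1 hw1 hne
        exact Relation.ReflTransGen.single ⟨hu1, hw1, huS, hwS, e, he, hue, hwe⟩
    | head hstep hrest ih =>
      intro H hHm hxH u hu1 huS huH
      obtain ⟨hbp, hbq, hrp, hrq, e, hpe, hqe, hre⟩ := hstep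
      obtain ⟨E, heE, hEm⟩ := aux_exists_facet e
      obtain ⟨b', hb'S, hb'⟩ : ∃ b' : Fin d, b' ∈ S ∧ κ u ≠ b' := by
        have hcu : κ u = s ∨ κ u = t := by rw [hSeq] at huS; simpa using huS
        rcases hcu with h | h
        · exact ⟨t, htS, by rw [h]; exact hst⟩
        · exact ⟨s, hsS, by rw [h]; exact fun hh => hst hh.symm⟩
      obtain ⟨uE, huEE, huE1, huEa⟩ := aux_vertex_color hSP hii hEm (hi E hEm) (κ u)
      have step1 := claim d _ (by omega) (κ u) b' huS hb'S hb' H E hxH (hpe.trans heE) hHm hEm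
        u uE hu1 rfl huH huE1 huEa huEE
      have step2 := ih E hEm (hqe.trans heE) uE huE1 (by rw [huEa]; exact huS) huEE
      exact step1.trans step2
  obtain ⟨F0, hvF0, hF0m⟩ := aux_exists_facet v
  exact key2 v hconn F0 hF0m hvF0 v hv1 hvS hvF0
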